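/- Let C_1,...,C_l be affine subspaces (or closed linear subspaces) of ℝ^m with nonempty intersection C, and let x_{n+1} = P_{C_{(n mod l)+1}}(x_n) starting from x̂. Then x_n converges to P_C(x̂), the least-squares projection of x̂ onto the intersection. -/

import Mathlib

/-- `p` is the least-squares (metric) projection of `y` onto `S`. -/
def IsProjOn {m : ℕ} (S : Set (EuclideanSpace ℝ (Fin m)))
    (y p : EuclideanSpace ℝ (Fin m)) : Prop :=
  p ∈ S ∧ ∀ z ∈ S, ‖y - p‖ ≤ ‖y - z‖

open scoped RealInnerProductSpace
open Filter

lemma isProjOn_affine_inner_eq_zero {m : ℕ} {S : Set (EuclideanSpace ℝ (Fin m))}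
    (hS : ∃ A : AffineSubspace ℝ (EuclideanSpace ℝ (Fin m)), (A : Set _) = S)
    {y p : EuclideanSpace ℝ (Fin m)} (h : IsProjOn S y p) :
    ∀ z ∈ S, ⟪y - p, z - p⟫ = 0 := by
  obtain ⟨A, rfl⟩ := hS
  obtain ⟨hpS, hmin⟩ := h
  intro z hz
  set c : ℝ := ⟪y - p, z - p⟫ with hc
  set d : ℝ := ‖z - p‖ ^ 2 with hd
  have key : ∀ t : ℝ, 0 ≤ t ^ 2 * d - 2 * t * c := by
    intro t
    have hmem : p + t • (z - p) ∈ A := by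
      have h0 := AffineMap.lineMap_mem t hpS hz
      rw [AffineMap.lineMap_apply_module] at h0
      have heq : p + t • (z - p) = (1 - t) • p + t • z := by module
      rwa [heq]
    have h1 : ‖y - p‖ ≤ ‖y - (p + t • (z - p))‖ := hmin _ hmem
    have h2 : ‖y - (p + t • (z - p))‖ ^ 2 = ‖y - p‖ ^ 2 - 2 * t * c + t ^ 2 * d := by
      have hre : y - (p + t • (z - p)) = (y - p) - t • (z - p) := by abel
      rw [hre, norm_sub_sq_real, real_inner_smul_right, norm_smul]
      simp [hc, hd, mul_pow]
      ring
    nlinarith [norm_nonneg (y - p), norm_nonneg (y - (p + t • (z - p)))]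
  have hd0 : 0 ≤ d := by positivity
  set t : ℝ := c / (d + 1) with htdef
  have htc : c = t * (d + 1) := by
    have hpos : (0:ℝ) < d + 1 := by linarith
    rw [htdef, div_mul_cancel₀ c hpos.ne']
  have h1 := key t
  have h2 : t = 0 := by nlinarith [sq_nonneg t]
  rw [htc, h2, zero_mul]

/-- Von Neumann–Halperin: for affine subspaces, cyclic projections converge to the
projection of the starting point onto the intersection. -/
theorem cyclic_projections_affine_converge_to_proj {m l : ℕ} (hl : 0 < l)
    (C : Fin l → Set (EuclideanSpace ℝ (Fin m)))
    (haff : ∀ i, ∃ S : AffineSubspace ℝ (EuclideanSpace ℝ (Fin m)), (S : Set _) = C i)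
    (hclosed : ∀ i, IsClosed (C i))
    (hne : (⋂ i, C i).Nonempty)
    (x : ℕ → EuclideanSpace ℝ (Fin m))
    (hstep : ∀ n, IsProjOn (C ⟨n % l, Nat.mod_lt n hl⟩) (x n) (x (n + 1))) :
    ∃ p, IsProjOn (⋂ i, C i) (x 0) p ∧ Filter.Tendsto x Filter.atTop (nhds p) := by
  classical
  obtain ⟨v, hv⟩ := hne
  have horth : ∀ n, ∀ z ∈ C ⟨n % l, Nat.mod_lt n hl⟩, ⟪x n - x (n+1), z - x (n+1)⟫ = 0 :=
    fun n => isProjOn_affine_inner_eq_zero (haff _) (hstep n)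
  have key : ∀ q ∈ (⋂ i, C i), ∀ n,
      ‖x n - q‖ ^ 2 = ‖x (n+1) - q‖ ^ 2 + ‖x n - x (n+1)‖ ^ 2 := by
    intro q hq n
    have h0 := horth n q (Set.mem_iInter.mp hq _)
    have hinner : ⟪x n - x (n+1), x (n+1) - q⟫ = 0 := by
      have hrw : x (n+1) - q = -(q - x (n+1)) := by abel
      rw [hrw, inner_neg_right, h0, neg_zero]
    have hdecomp : x n - q = (x n - x (n+1)) + (x (n+1) - q) := by abel
    have hinner' : ⟪x (n+1) - q, x n - x (n+1)⟫ = 0 := by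
      rw [real_inner_comm]; exact hinner
    rw [hdecomp, norm_add_sq_real]
    simp only [hinner, hinner']
    ring
  have hmono : ∀ q ∈ (⋂ i, C i), ∀ n, ‖x (n+1) - q‖ ≤ ‖x n - q‖ := by
    intro q hq n
    have h := key q hq n
    nlinarith [norm_nonneg (x (n+1) - q), norm_nonneg (x n - q), norm_nonneg (x n - x (n+1))]
  have hbsq : Antitone (fun n => ‖x n - v‖ ^ 2) := antitone_nat_of_succ_le (fun n => by
    have h1 := hmono v hv n
    have h2 := norm_nonneg (x (n+1) - v)
    nlinarith)
  have hbdd : BddBelow (Set.range fun n => ‖x n - v‖ ^ 2) :=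
    ⟨0, by rintro _ ⟨n, rfl⟩; positivity⟩
  have hconv : Tendsto (fun n => ‖x n - v‖ ^ 2) atTop (nhds (⨅ n, ‖x n - v‖ ^ 2)) :=
    tendsto_atTop_ciInf hbsq hbdd
  have hdiff0 : Tendsto (fun n => ‖x n - x (n+1)‖ ^ 2) atTop (nhds 0) := by
    have heq : (fun n => ‖x n - x (n+1)‖ ^ 2)
        = fun n => ‖x n - v‖ ^ 2 - ‖x (n+1) - v‖ ^ 2 := by
      funext n; have := key v hv n; linarith
    rw [heq]
    have h2 : Tendsto (fun n => ‖x (n+1) - v‖ ^ 2) atTop (nhds (⨅ n, ‖x n - v‖ ^ 2)) :=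
      hconv.comp (tendsto_add_atTop_nat 1)
    simpa using hconv.sub h2
  have hd0 : Tendsto (fun n => ‖x n - x (n+1)‖) atTop (nhds 0) := by
    have h := (Real.continuous_sqrt.tendsto 0).comp hdiff0
    simp only [Real.sqrt_zero] at h
    convert h using 2 with n
    simp [Function.comp, Real.sqrt_sq (norm_nonneg _)]
  have hdk : ∀ k, Tendsto (fun n => ‖x n - x (n + k)‖) atTop (nhds 0) := by
    intro k
    induction k with
    | zero => simpa using tendsto_const_nhds
    | succ k ih =>
      have hub : ∀ n, ‖x n - x (n + (k+1))‖ ≤ ‖x n - x (n + k)‖ + ‖x (n+k) - x (n+k+1)‖ := by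
        intro n
        have : x n - x (n + (k+1)) = (x n - x (n + k)) + (x (n+k) - x (n+k+1)) := by
          rw [show n + (k+1) = n + k + 1 from rfl]; abel
        rw [this]; exact norm_add_le _ _
      have hsum : Tendsto (fun n => ‖x n - x (n + k)‖ + ‖x (n+k) - x (n+k+1)‖) atTop (nhds 0) := by
        have h2 : Tendsto (fun n => ‖x (n+k) - x (n+k+1)‖) atTop (nhds 0) :=
          hd0.comp (tendsto_add_atTop_nat k)
        simpa using ih.add h2
      exact squeeze_zero (fun n => norm_nonneg _) hub hsum
  -- boundedness and subsequence
  have hrad : ∀ n, x n ∈ Metric.closedBall v ‖x 0 - v‖ := by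
    intro n
    have hanti : Antitone (fun n => ‖x n - v‖) := antitone_nat_of_succ_le (hmono v hv)
    simpa [Metric.mem_closedBall, dist_eq_norm] using hanti (Nat.zero_le n)
  obtain ⟨p, _, φ, hφ, hφt⟩ :=
    (isCompact_closedBall v ‖x 0 - v‖).tendsto_subseq (fun j => hrad (j * l))
  have hφl : Tendsto (fun j => φ j * l) atTop atTop :=
    tendsto_atTop_mono (fun j => Nat.le_mul_of_pos_right _ hl) hφ.tendsto_atTop
  -- p belongs to every C i
  have hpC : p ∈ ⋂ i, C i := by
    rw [Set.mem_iInter]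
    intro i
    have hmem : ∀ j, x (φ j * l + i.val + 1) ∈ C i := by
      intro j
      have h := (hstep (φ j * l + i.val)).1
      have hidx : (⟨(φ j * l + i.val) % l, Nat.mod_lt _ hl⟩ : Fin l) = i := by
        apply Fin.ext
        show (φ j * l + i.val) % l = i.val
        rw [Nat.mul_comm, Nat.mul_add_mod, Nat.mod_eq_of_lt i.isLt]
      rwa [hidx] at h
    have hseq : Tendsto (fun j => x (φ j * l + i.val + 1)) atTop (nhds p) := by
      rw [tendsto_iff_norm_sub_tendsto_zero]
      have hub : ∀ j, ‖x (φ j * l + i.val + 1) - p‖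
          ≤ ‖x (φ j * l) - x (φ j * l + (i.val + 1))‖ + ‖x (φ j * l) - p‖ := by
        intro j
        have hrw : x (φ j * l + i.val + 1) - p
            = -(x (φ j * l) - x (φ j * l + (i.val + 1))) + (x (φ j * l) - p) := by
          rw [show φ j * l + (i.val + 1) = φ j * l + i.val + 1 from (Nat.add_assoc _ _ _).symm]
          abel
        rw [hrw]
        exact le_trans (norm_add_le _ _) (by rw [norm_neg])
      have h1 : Tendsto (fun j => ‖x (φ j * l) - x (φ j * l + (i.val + 1))‖) atTop (nhds 0) :=
        (hdk (i.val + 1)).comp hφl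
      have h2 : Tendsto (fun j => ‖x (φ j * l) - p‖) atTop (nhds 0) := by
        rw [← tendsto_iff_norm_sub_tendsto_zero]; exact hφt
      exact squeeze_zero (fun j => norm_nonneg _) hub (by simpa using h1.add h2)
    exact (hclosed i).mem_of_tendsto hseq (Filter.Eventually.of_forall hmem)
  -- full convergence to p
  have hx : Tendsto x atTop (nhds p) := by
    rw [tendsto_iff_norm_sub_tendsto_zero]
    have hanti : Antitone (fun n => ‖x n - p‖) := antitone_nat_of_succ_le (hmono p hpC)
    have hbdd2 : BddBelow (Set.range fun n => ‖x n - p‖) :=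
      ⟨0, by rintro _ ⟨n, rfl⟩; positivity⟩
    have hL : Tendsto (fun n => ‖x n - p‖) atTop (nhds (⨅ n, ‖x n - p‖)) :=
      tendsto_atTop_ciInf hanti hbdd2
    have hsubL : Tendsto (fun j => ‖x (φ j * l) - p‖) atTop (nhds (⨅ n, ‖x n - p‖)) :=
      hL.comp hφl
    have hsub0 : Tendsto (fun j => ‖x (φ j * l) - p‖) atTop (nhds 0) := by
      rw [← tendsto_iff_norm_sub_tendsto_zero]; exact hφt
    rwa [tendsto_nhds_unique hsubL hsub0] at hL
  -- orthogonality of x 0 - p to directions of the intersection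
  have hperp : ∀ z ∈ (⋂ i, C i), ⟪x 0 - p, z - p⟫ = 0 := by
    intro z hz
    have hn : ∀ n, ⟪x 0 - x n, z - p⟫ = 0 := by
      intro n
      induction n with
      | zero => simp
      | succ n ih =>
        have hdecomp : x 0 - x (n+1) = (x 0 - x n) + (x n - x (n+1)) := by abel
        have hz' := horth n z (Set.mem_iInter.mp hz _)
        have hp' := horth n p (Set.mem_iInter.mp hpC _)
        have hzp : x n - x (n+1) = x n - x (n+1) := rfl
        have h3 : ⟪x n - x (n+1), z - p⟫ = 0 := by
          have hrw : z - p = (z - x (n+1)) - (p - x (n+1)) := by abel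
          rw [hrw, inner_sub_right, hz', hp', sub_zero]
        rw [hdecomp, inner_add_left, ih, h3, add_zero]
    have hlim : Tendsto (fun n => ⟪x 0 - x n, z - p⟫) atTop (nhds ⟪x 0 - p, z - p⟫) :=
      (tendsto_const_nhds.sub hx).inner tendsto_const_nhds
    have hlim0 : Tendsto (fun n => ⟪x 0 - x n, z - p⟫) atTop (nhds (0:ℝ)) := by
      simpa [hn] using (tendsto_const_nhds : Tendsto (fun _ : ℕ => (0:ℝ)) atTop (nhds 0))
    exact tendsto_nhds_unique hlim hlim0
  refine ⟨p, ⟨hpC, ?_⟩, hx⟩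
  intro z hz
  have hpyth : ‖x 0 - z‖ ^ 2 = ‖x 0 - p‖ ^ 2 + ‖p - z‖ ^ 2 := by
    have hdecomp : x 0 - z = (x 0 - p) + (p - z) := by abel
    have hin : ⟪x 0 - p, p - z⟫ = 0 := by
      have hrw : p - z = -(z - p) := by abel
      rw [hrw, inner_neg_right, hperp z hz, neg_zero]
    rw [hdecomp, norm_add_sq_real, hin]
    ring
  nlinarith [norm_nonneg (x 0 - z), norm_nonneg (x 0 - p), norm_nonneg (p - z)]
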